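/- Let (H_X, H_Z) be a CSS code with k logical qubits and let H_C ∈ F₂^{(n_c−k_c) × n_c} be a classical parity check matrix of full row rank n_c − k_c (so that dim ker(H_C) = k_c). Let H'_X and H'_Z be the check matrices of the generalized thickened code. Then H'_X · (H'_Z)ᵀ = 0, and the thickened code has k·k_c logical qubits: dim_{F₂}( ker(H'_X) / rowspan(H'_Z) ) = k · k_c. -/

import Mathlib

set_option synthInstance.maxHeartbeats 1000000
set_option maxHeartbeats 2000000


open Matrix

/-- The `F₂`-span of the rows of a matrix. -/
noncomputable def rowSpan {ι κ : Type*} [Fintype ι] [Fintype κ] (M : Matrix ι κ (ZMod 2)) :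
    Submodule (ZMod 2) (κ → ZMod 2) :=
  Submodule.span (ZMod 2) (Set.range fun i => M i)

/-- The kernel `{v : M v = 0}` of a matrix, as a submodule. -/
noncomputable def kerMat {ι κ : Type*} [Fintype ι] [Fintype κ] (M : Matrix ι κ (ZMod 2)) :
    Submodule (ZMod 2) (κ → ZMod 2) :=
  LinearMap.ker M.mulVecLin

/-- Number of logical qubits of a CSS code: `dim (ker H_X / rowspan H_Z)`
(the quotient of the kernel by the intersection of the row span with the kernel,
which agrees with `ker/rowspan` when `rowspan ⊆ ker`). -/
noncomputable def logicalDim {ι₁ ι₂ κ : Type*} [Fintype ι₁] [Fintype ι₂] [Fintype κ]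
    (HX : Matrix ι₁ κ (ZMod 2)) (HZ : Matrix ι₂ κ (ZMod 2)) : ℕ :=
  Module.finrank (ZMod 2) (↥(kerMat HX) ⧸ (rowSpan HZ).comap (kerMat HX).subtype)

/-- X check matrix of the generalized thickened code: `( H_X ⊗ I_{n_c} | I_{n_X} ⊗ H_Cᵀ )`.
Region A qubits are indexed by `Fin n × Fin nc`, region B qubits by `Fin nX × Fin r`. -/
def thickX {nX n r nc : ℕ} (HX : Matrix (Fin nX) (Fin n) (ZMod 2))
    (HC : Matrix (Fin r) (Fin nc) (ZMod 2)) :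
    Matrix (Fin nX × Fin nc) ((Fin n × Fin nc) ⊕ (Fin nX × Fin r)) (ZMod 2) :=
  Matrix.of fun s p =>
    match p with
    | Sum.inl (i, c) => if c = s.2 then HX s.1 i else 0
    | Sum.inr (x, j) => if x = s.1 then HC j s.2 else 0

/-- Z check matrix of the generalized thickened code:
first block row `( H_Z ⊗ I_{n_c} | 0 )`,
second block row `( I_n ⊗ H_C | H_Xᵀ ⊗ I_{n_c-k_c} )`. -/
def thickZ {nX nZ n r nc : ℕ} (HX : Matrix (Fin nX) (Fin n) (ZMod 2))
    (HZ : Matrix (Fin nZ) (Fin n) (ZMod 2)) (HC : Matrix (Fin r) (Fin nc) (ZMod 2)) :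
    Matrix ((Fin nZ × Fin nc) ⊕ (Fin n × Fin r)) ((Fin n × Fin nc) ⊕ (Fin nX × Fin r)) (ZMod 2) :=
  Matrix.of fun s p =>
    match s, p with
    | Sum.inl (z, c), Sum.inl (i, c') => if c' = c then HZ z i else 0
    | Sum.inl _, Sum.inr _ => 0
    | Sum.inr (i, j), Sum.inl (i', c) => if i' = i then HC j c else 0
    | Sum.inr (i, j), Sum.inr (x, j') => if j' = j then HX x i else 0

/-! ### Generic helper lemmas -/

lemma z2_add_eq_zero_iff (a b : ZMod 2) : a + b = 0 ↔ a = b := by revert a b; decide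

lemma mem_kerMat {ι κ : Type*} [Fintype ι] [Fintype κ] {M : Matrix ι κ (ZMod 2)}
    {v : κ → ZMod 2} : v ∈ kerMat M ↔ M.mulVec v = 0 := by
  simp [kerMat, LinearMap.mem_ker]

lemma rowSpan_le_kerMat {ι₁ ι₂ κ : Type*} [Fintype ι₁] [Fintype ι₂] [Fintype κ]
    {M : Matrix ι₁ κ (ZMod 2)} {N : Matrix ι₂ κ (ZMod 2)}
    (h : M * N.transpose = 0) : rowSpan N ≤ kerMat M := by
  rw [rowSpan, Submodule.span_le]
  rintro _ ⟨i, rfl⟩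
  rw [SetLike.mem_coe, mem_kerMat]
  ext j
  have := congrFun (congrFun h j) i
  simpa [Matrix.mul_apply, Matrix.mulVec, dotProduct] using this

lemma logicalDim_add_finrank {ι₁ ι₂ κ : Type*} [Fintype ι₁] [Fintype ι₂] [Fintype κ]
    {M : Matrix ι₁ κ (ZMod 2)} {N : Matrix ι₂ κ (ZMod 2)}
    (h : rowSpan N ≤ kerMat M) :
    logicalDim M N + Module.finrank (ZMod 2) (rowSpan N)
      = Module.finrank (ZMod 2) (kerMat M) := by
  have e : Module.finrank (ZMod 2) ((rowSpan N).comap (kerMat M).subtype)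
      = Module.finrank (ZMod 2) (rowSpan N) :=
    LinearEquiv.finrank_eq (Submodule.comapSubtypeEquivOfLe h)
  rw [logicalDim, ← e]
  exact Submodule.finrank_quotient_add_finrank _

lemma finrank_map_of_injOn {V W : Type*} [AddCommGroup V] [AddCommGroup W]
    [Module (ZMod 2) V] [Module (ZMod 2) W] [FiniteDimensional (ZMod 2) V]
    (Φ : V →ₗ[ZMod 2] W) (p : Submodule (ZMod 2) V)
    (h : ∀ v ∈ p, Φ v = 0 → v = 0) :
    Module.finrank (ZMod 2) (Submodule.map Φ p) = Module.finrank (ZMod 2) p := by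
  have hinj : Function.Injective (Φ.comp p.subtype) := by
    rw [← LinearMap.ker_eq_bot, LinearMap.ker_eq_bot']
    intro m hm
    exact Subtype.ext (h m.1 m.2 hm)
  have hmap : Submodule.map Φ p = LinearMap.range (Φ.comp p.subtype) := by
    rw [LinearMap.range_comp, Submodule.range_subtype]
  rw [hmap]
  exact (LinearEquiv.finrank_eq (LinearEquiv.ofInjective _ hinj)).symm

lemma sum_prod_eq_single_fst {α β M : Type*} [Fintype α] [Fintype β] [DecidableEq α]
    [AddCommMonoid M] (a₀ : α) (g : α × β → M) (h : ∀ q : α × β, q.1 ≠ a₀ → g q = 0) :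
    ∑ q : α × β, g q = ∑ b, g (a₀, b) := by
  rw [Fintype.sum_prod_type, Finset.sum_eq_single a₀]
  · intro a _ ha
    exact Finset.sum_eq_zero fun b _ => h (a, b) ha
  · simp

lemma sum_prod_eq_single_snd {α β M : Type*} [Fintype α] [Fintype β] [DecidableEq β]
    [AddCommMonoid M] (b₀ : β) (g : α × β → M) (h : ∀ q : α × β, q.2 ≠ b₀ → g q = 0) :
    ∑ q : α × β, g q = ∑ a, g (a, b₀) := by
  rw [Fintype.sum_prod_type_right, Finset.sum_eq_single b₀]
  · intro b _ hb
    exact Finset.sum_eq_zero fun a _ => h (a, b) hb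
  · simp

/-! ### Column submodules -/

def colSub {n : ℕ} (P : Submodule (ZMod 2) (Fin n → ZMod 2)) (m : ℕ) :
    Submodule (ZMod 2) ((Fin n × Fin m) → ZMod 2) where
  carrier := {u | ∀ c, (fun i => u (i, c)) ∈ P}
  add_mem' := fun ha hb c => P.add_mem (ha c) (hb c)
  zero_mem' := fun c => P.zero_mem
  smul_mem' := fun s a ha c => P.smul_mem s (ha c)

lemma mem_colSub {n m : ℕ} {P : Submodule (ZMod 2) (Fin n → ZMod 2)}
    {u : (Fin n × Fin m) → ZMod 2} : u ∈ colSub P m ↔ ∀ c, (fun i => u (i, c)) ∈ P :=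
  Iff.rfl

lemma colSub_mono {n m : ℕ} {P Q : Submodule (ZMod 2) (Fin n → ZMod 2)} (h : P ≤ Q) :
    colSub P m ≤ colSub Q m := fun _ hu c => h (hu c)

noncomputable def colEquiv {n : ℕ} (P : Submodule (ZMod 2) (Fin n → ZMod 2)) (m : ℕ) :
    colSub P m ≃ₗ[ZMod 2] (Fin m → P) where
  toFun u := fun c => ⟨fun i => u.1 (i, c), u.2 c⟩
  map_add' u v := rfl
  map_smul' s u := rfl
  invFun f := ⟨fun p => (f p.2).1 p.1, fun c => (f c).2⟩
  left_inv u := rfl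
  right_inv f := rfl

lemma finrank_colSub {n : ℕ} (P : Submodule (ZMod 2) (Fin n → ZMod 2)) (m : ℕ) :
    Module.finrank (ZMod 2) (colSub P m) = m * Module.finrank (ZMod 2) P := by
  rw [LinearEquiv.finrank_eq (colEquiv P m), Module.finrank_pi_fintype]
  simp [Finset.sum_const, mul_comm]

/-! ### Multiplication by `HC` on the right -/

def mulHC {r nc : ℕ} (n : ℕ) (HC : Matrix (Fin r) (Fin nc) (ZMod 2)) :
    ((Fin n × Fin r) → ZMod 2) →ₗ[ZMod 2] ((Fin n × Fin nc) → ZMod 2) where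
  toFun Λ := fun p => ∑ j, Λ (p.1, j) * HC j p.2
  map_add' a b := by funext p; simp [add_mul, Finset.sum_add_distrib]
  map_smul' s a := by
    funext p
    simp [Finset.mul_sum, mul_assoc, smul_eq_mul]

lemma mulHC_apply {r nc n : ℕ} (HC : Matrix (Fin r) (Fin nc) (ZMod 2))
    (Λ : (Fin n × Fin r) → ZMod 2) (p : Fin n × Fin nc) :
    mulHC n HC Λ p = ∑ j, Λ (p.1, j) * HC j p.2 := rfl

section HCfacts

variable {r nc : ℕ} {HC : Matrix (Fin r) (Fin nc) (ZMod 2)}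
  (hrank : LinearIndependent (ZMod 2) (fun i : Fin r => HC i))

include hrank

lemma HC_rank_eq : Module.finrank (ZMod 2) (LinearMap.range HC.mulVecLin) = r := by
  have h1 : Matrix.rank HCᵀ = r := by
    rw [Matrix.rank, Matrix.range_mulVecLin, Matrix.col_def, Matrix.transpose_transpose]
    simpa using finrank_span_eq_card hrank
  have h2 := Matrix.rank_transpose HC
  rw [h1] at h2
  exact h2.symm

lemma HC_surj : Function.Surjective HC.mulVecLin := by
  rw [← LinearMap.range_eq_top]
  apply Submodule.eq_top_of_finrank_eq
  rw [HC_rank_eq hrank, Module.finrank_fintype_fun_eq_card, Fintype.card_fin]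

lemma HC_ker_finrank : Module.finrank (ZMod 2) (LinearMap.ker HC.mulVecLin) + r = nc := by
  have := LinearMap.finrank_range_add_finrank_ker HC.mulVecLin
  rw [HC_rank_eq hrank, Module.finrank_fintype_fun_eq_card, Fintype.card_fin] at this
  omega

lemma mulHC_inj (n : ℕ) : Function.Injective (mulHC n HC) := by
  rw [← LinearMap.ker_eq_bot, LinearMap.ker_eq_bot']
  intro Λ hΛ
  funext q
  obtain ⟨i, j⟩ := q
  refine Fintype.linearIndependent_iff.mp hrank (fun j => Λ (i, j)) ?_ j
  funext c
  have := congrFun hΛ (i, c)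
  simpa [mulHC_apply] using this

/-- The key trick: if all "HC-combinations" of the columns of `w` lie in `Q`, then all
columns of `w` lie in `Q` (uses surjectivity of `HC` on columns). -/
lemma trick {α : Type*} [Fintype α] (Q : Submodule (ZMod 2) (α → ZMod 2))
    (w : α × Fin r → ZMod 2)
    (h : ∀ c, (fun x => ∑ j, HC j c * w (x, j)) ∈ Q) (j : Fin r) :
    (fun x => w (x, j)) ∈ Q := by
  obtain ⟨y, hy⟩ := HC_surj hrank (Pi.single j 1)
  have hmem : (∑ c, y c • (fun x => ∑ j', HC j' c * w (x, j'))) ∈ Q :=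
    Submodule.sum_mem _ fun c _ => Q.smul_mem _ (h c)
  convert hmem using 1
  funext x
  rw [Finset.sum_apply]
  have step : ∀ c, (y c • fun x => ∑ j', HC j' c * w (x, j')) x
      = ∑ j', (y c * HC j' c) * w (x, j') := by
    intro c
    simp [Finset.mul_sum, mul_assoc]
  rw [Finset.sum_congr rfl fun c _ => step c, Finset.sum_comm]
  have : ∀ j', ∑ c, (y c * HC j' c) * w (x, j') = (Pi.single j 1 : Fin r → ZMod 2) j' * w (x, j') := by
    intro j'
    rw [← Finset.sum_mul]
    congr 1
    have := congrFun hy j'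
    rw [Matrix.mulVecLin_apply] at this
    rw [← this]
    simp [Matrix.mulVec, dotProduct, mul_comm]
  rw [Finset.sum_congr rfl fun j' _ => this j']
  simp [Pi.single_apply]

omit hrank in
lemma mulHC_col_mem {n : ℕ} (P : Submodule (ZMod 2) (Fin n → ZMod 2))
    {Λ : (Fin n × Fin r) → ZMod 2} (hΛ : Λ ∈ colSub P r) : mulHC n HC Λ ∈ colSub P nc := by
  intro c
  have key : (fun i => mulHC n HC Λ (i, c)) = ∑ j, HC j c • (fun i => Λ (i, j)) := by
    funext i
    rw [mulHC_apply, Finset.sum_apply]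
    exact Finset.sum_congr rfl fun j _ => (mul_comm _ _)
  rw [key]
  exact Submodule.sum_mem _ fun j _ => P.smul_mem _ (hΛ j)

lemma colSub_inf_range_mulHC {n : ℕ} (P : Submodule (ZMod 2) (Fin n → ZMod 2)) :
    colSub P nc ⊓ LinearMap.range (mulHC n HC) = Submodule.map (mulHC n HC) (colSub P r) := by
  apply le_antisymm
  · rintro u ⟨hu1, Λ, rfl⟩
    refine ⟨Λ, fun j => trick hrank P Λ (fun c => ?_) j, rfl⟩
    have := hu1 c
    convert this using 2 with i
    rw [mulHC_apply]
    exact Finset.sum_congr rfl fun j _ => (mul_comm _ _)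
  · rintro _ ⟨Λ, hΛ, rfl⟩
    exact ⟨mulHC_col_mem P hΛ, ⟨Λ, rfl⟩⟩

end HCfacts

/-! ### The thickened X matrix: mulVec and kernel -/

section Thick

variable {nX nZ n r nc : ℕ} (HX : Matrix (Fin nX) (Fin n) (ZMod 2))
  (HZ : Matrix (Fin nZ) (Fin n) (ZMod 2)) (HC : Matrix (Fin r) (Fin nc) (ZMod 2))

lemma thickX_mulVec (v : ((Fin n × Fin nc) ⊕ (Fin nX × Fin r)) → ZMod 2)
    (x : Fin nX) (c : Fin nc) :
    (thickX HX HC).mulVec v (x, c)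
      = (∑ i, HX x i * v (Sum.inl (i, c))) + (∑ j, HC j c * v (Sum.inr (x, j))) := by
  have expand : (thickX HX HC).mulVec v (x, c)
      = (∑ p : Fin n × Fin nc, thickX HX HC (x, c) (Sum.inl p) * v (Sum.inl p))
        + (∑ q : Fin nX × Fin r, thickX HX HC (x, c) (Sum.inr q) * v (Sum.inr q)) := by
    simp [Matrix.mulVec, dotProduct, Fintype.sum_sum_type]
  rw [expand]
  congr 1
  · rw [sum_prod_eq_single_snd c _ (fun q hq => by
      obtain ⟨i, c'⟩ := q
      simp only [thickX, Matrix.of_apply]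
      simp [show ¬ (c' = c) from hq])]
    exact Finset.sum_congr rfl fun i _ => by simp [thickX]
  · rw [sum_prod_eq_single_fst x _ (fun q hq => by
      obtain ⟨x', j⟩ := q
      simp only [thickX, Matrix.of_apply]
      simp [show ¬ (x' = x) from hq])]
    exact Finset.sum_congr rfl fun j _ => by simp [thickX]

lemma mem_kerThick (v : ((Fin n × Fin nc) ⊕ (Fin nX × Fin r)) → ZMod 2) :
    v ∈ kerMat (thickX HX HC) ↔ ∀ (x : Fin nX) (c : Fin nc),
      (∑ i, HX x i * v (Sum.inl (i, c))) + (∑ j, HC j c * v (Sum.inr (x, j))) = 0 := by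
  rw [mem_kerMat]
  constructor
  · intro h x c
    have := congrFun h (x, c)
    rwa [thickX_mulVec, Pi.zero_apply] at this
  · intro h
    funext s
    obtain ⟨x, c⟩ := s
    rw [thickX_mulVec]
    exact h x c

lemma thick_orth (hcss : HX * HZ.transpose = 0) :
    thickX HX HC * (thickZ HX HZ HC).transpose = 0 := by
  ext s t
  obtain ⟨x, c⟩ := s
  rw [Matrix.mul_apply, Fintype.sum_sum_type]
  cases t with
  | inl zc =>
    obtain ⟨z, c'⟩ := zc
    have h2 : ∑ q : Fin nX × Fin r, thickX HX HC (x, c) (Sum.inr q)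
        * (thickZ HX HZ HC)ᵀ (Sum.inr q) (Sum.inl (z, c')) = 0 := by
      apply Finset.sum_eq_zero
      rintro ⟨x', j⟩ _
      simp [thickZ, Matrix.transpose_apply]
    have h1 : ∑ p : Fin n × Fin nc, thickX HX HC (x, c) (Sum.inl p)
        * (thickZ HX HZ HC)ᵀ (Sum.inl p) (Sum.inl (z, c'))
        = if c = c' then ∑ i, HX x i * HZ z i else 0 := by
      rw [sum_prod_eq_single_snd c _ (fun q hq => by
        obtain ⟨i, c₂⟩ := q
        simp only [thickX, Matrix.of_apply]
        simp [show ¬ (c₂ = c) from hq])]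
      by_cases h : c = c'
      · subst h
        simp [thickX, thickZ, Matrix.transpose_apply]
      · simp [thickX, thickZ, Matrix.transpose_apply, h]
    rw [h1, h2, add_zero, Matrix.zero_apply]
    split_ifs with h
    · have := congrFun (congrFun hcss x) z
      rw [Matrix.mul_apply] at this
      simpa [Matrix.transpose_apply] using this
    · rfl
  | inr ij =>
    obtain ⟨i, j⟩ := ij
    have h1 : ∑ p : Fin n × Fin nc, thickX HX HC (x, c) (Sum.inl p)
        * (thickZ HX HZ HC)ᵀ (Sum.inl p) (Sum.inr (i, j))
        = HX x i * HC j c := by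
      rw [sum_prod_eq_single_snd c _ (fun q hq => by
        obtain ⟨i', c₂⟩ := q
        simp only [thickX, Matrix.of_apply]
        simp [show ¬ (c₂ = c) from hq])]
      rw [Finset.sum_eq_single i]
      · simp [thickX, thickZ, Matrix.transpose_apply]
      · intro i' _ hne
        simp [thickZ, Matrix.transpose_apply, hne]
      · simp
    have h2 : ∑ q : Fin nX × Fin r, thickX HX HC (x, c) (Sum.inr q)
        * (thickZ HX HZ HC)ᵀ (Sum.inr q) (Sum.inr (i, j))
        = HC j c * HX x i := by
      rw [sum_prod_eq_single_fst x _ (fun q hq => by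
        obtain ⟨x', j₂⟩ := q
        simp only [thickX, Matrix.of_apply]
        simp [show ¬ (x' = x) from hq])]
      rw [Finset.sum_eq_single j]
      · simp [thickX, thickZ, Matrix.transpose_apply]
      · intro j₂ _ hne
        simp [thickZ, Matrix.transpose_apply, hne]
      · simp
    rw [h1, h2, Matrix.zero_apply, mul_comm (HC j c) (HX x i)]
    exact CharTwo.add_self_eq_zero _

end Thick

/-! ### Image of the thickened kernel and row span under projection to region A -/

section MapLemmas

variable {nX nZ n r nc : ℕ} (HX : Matrix (Fin nX) (Fin n) (ZMod 2))
  (HZ : Matrix (Fin nZ) (Fin n) (ZMod 2)) (HC : Matrix (Fin r) (Fin nc) (ZMod 2))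

abbrev projA (nX n r nc : ℕ) :
    (((Fin n × Fin nc) ⊕ (Fin nX × Fin r)) → ZMod 2) →ₗ[ZMod 2] ((Fin n × Fin nc) → ZMod 2) :=
  LinearMap.funLeft (ZMod 2) (ZMod 2) Sum.inl

lemma map_kerThick (hrank : LinearIndependent (ZMod 2) (fun i : Fin r => HC i)) :
    Submodule.map (projA nX n r nc) (kerMat (thickX HX HC))
      = colSub (kerMat HX) nc ⊔ LinearMap.range (mulHC n HC) := by
  apply le_antisymm
  · rintro _ ⟨v, hv, rfl⟩
    rw [SetLike.mem_coe, mem_kerThick] at hv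
    have hw : ∀ j, (fun x => v (Sum.inr (x, j))) ∈ LinearMap.range HX.mulVecLin := by
      refine fun j => trick hrank _ (fun q => v (Sum.inr q)) (fun c => ?_) j
      refine ⟨fun i => v (Sum.inl (i, c)), ?_⟩
      funext x
      rw [Matrix.mulVecLin_apply]
      have h0 := hv x c
      rw [z2_add_eq_zero_iff] at h0
      simpa [Matrix.mulVec, dotProduct] using h0
    choose lam hlam using hw
    set Λ : (Fin n × Fin r) → ZMod 2 := fun q => lam q.2 q.1 with hΛdef
    refine Submodule.mem_sup.mpr
      ⟨(projA nX n r nc) v + mulHC n HC Λ, ?_, mulHC n HC Λ, ⟨Λ, rfl⟩, ?_⟩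
    · intro c
      rw [mem_kerMat]
      funext x
      have e1 : HX.mulVec (fun i => ((projA nX n r nc) v + mulHC n HC Λ) (i, c)) x
          = (∑ i, HX x i * v (Sum.inl (i, c))) + ∑ i, HX x i * ∑ j, Λ (i, j) * HC j c := by
        simp [Matrix.mulVec, dotProduct, LinearMap.funLeft_apply, mulHC_apply,
          mul_add, Finset.sum_add_distrib]
      have e2 : ∑ i, HX x i * ∑ j, Λ (i, j) * HC j c = ∑ j, HC j c * v (Sum.inr (x, j)) := by
        have st : ∀ i, HX x i * ∑ j, Λ (i, j) * HC j c = ∑ j, HX x i * Λ (i, j) * HC j c := by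
          intro i
          rw [Finset.mul_sum]
          exact Finset.sum_congr rfl fun j _ => by ring
        rw [Finset.sum_congr rfl fun i _ => st i, Finset.sum_comm]
        refine Finset.sum_congr rfl fun j _ => ?_
        have hx := congrFun (hlam j) x
        rw [Matrix.mulVecLin_apply] at hx
        have e3 : ∑ i, HX x i * Λ (i, j) * HC j c = (∑ i, HX x i * Λ (i, j)) * HC j c := by
          rw [Finset.sum_mul]
        rw [e3]
        have e4 : (∑ i, HX x i * Λ (i, j)) = v (Sum.inr (x, j)) := by
          rw [← hx]
          simp [Matrix.mulVec, dotProduct, hΛdef]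
        rw [e4, mul_comm]
      show HX.mulVec (fun i => ((projA nX n r nc) v + mulHC n HC Λ) (i, c)) x = 0
      rw [e1, e2]
      exact hv x c
    · funext p
      show ((projA nX n r nc) v + mulHC n HC Λ) p + mulHC n HC Λ p = (projA nX n r nc) v p
      rw [Pi.add_apply, add_assoc, CharTwo.add_self_eq_zero, add_zero]
  · apply sup_le
    · intro u hu
      refine ⟨Sum.elim u 0, ?_, rfl⟩
      rw [SetLike.mem_coe, mem_kerThick]
      intro x c
      simp only [Sum.elim_inl, Sum.elim_inr, Pi.zero_apply, mul_zero,
        Finset.sum_const_zero, add_zero]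
      have h0 := hu c
      rw [mem_kerMat] at h0
      have h1 := congrFun h0 x
      simpa [Matrix.mulVec, dotProduct] using h1
    · rintro _ ⟨Λ, rfl⟩
      refine ⟨Sum.elim (mulHC n HC Λ) (fun q => ∑ i, HX q.1 i * Λ (i, q.2)), ?_, rfl⟩
      rw [SetLike.mem_coe, mem_kerThick]
      intro x c
      simp only [Sum.elim_inl, Sum.elim_inr]
      have e : ∑ i, HX x i * mulHC n HC Λ (i, c) = ∑ j, HC j c * ∑ i, HX x i * Λ (i, j) := by
        simp only [mulHC_apply, Finset.mul_sum]
        rw [Finset.sum_comm]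
        exact Finset.sum_congr rfl fun j _ => Finset.sum_congr rfl fun i _ => by ring
      rw [e]
      exact CharTwo.add_self_eq_zero _

def embedCol (n : ℕ) {nc : ℕ} (c : Fin nc) :
    (Fin n → ZMod 2) →ₗ[ZMod 2] ((Fin n × Fin nc) → ZMod 2) where
  toFun s := fun p => if p.2 = c then s p.1 else 0
  map_add' a b := by funext p; by_cases h : p.2 = c <;> simp [h]
  map_smul' t a := by funext p; by_cases h : p.2 = c <;> simp [h]

lemma mulHC_single (i : Fin n) (j : Fin r) :
    mulHC n HC (Pi.single (i, j) 1) = fun p => if p.1 = i then HC j p.2 else 0 := by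
  funext p
  obtain ⟨i', c⟩ := p
  rw [mulHC_apply, Finset.sum_eq_single j]
  · by_cases h : i' = i
    · simp [Pi.single_apply, Prod.ext_iff, h]
    · simp [Pi.single_apply, Prod.ext_iff, h]
  · intro j₂ _ hne
    simp [Pi.single_apply, Prod.ext_iff, hne]
  · simp

lemma map_rowThick :
    Submodule.map (projA nX n r nc) (rowSpan (thickZ HX HZ HC))
      = colSub (rowSpan HZ) nc ⊔ LinearMap.range (mulHC n HC) := by
  rw [rowSpan, Submodule.map_span]
  have himg : (projA nX n r nc) '' (Set.range fun s => thickZ HX HZ HC s)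
      = Set.range (fun s => (projA nX n r nc) (thickZ HX HZ HC s)) := by
    rw [← Set.range_comp]
    rfl
  rw [himg]
  apply le_antisymm
  · rw [Submodule.span_le]
    rintro _ ⟨s, rfl⟩
    rw [SetLike.mem_coe]
    cases s with
    | inl zc =>
      obtain ⟨z, c⟩ := zc
      apply Submodule.mem_sup_left
      intro c'
      by_cases h : c' = c
      · subst h
        have e : (fun i => (projA nX n r nc) (thickZ HX HZ HC (Sum.inl (z, c'))) (i, c'))
            = HZ z := by
          funext i
          simp [LinearMap.funLeft_apply, thickZ]
        rw [e]
        exact Submodule.subset_span ⟨z, rfl⟩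
      · have e : (fun i => (projA nX n r nc) (thickZ HX HZ HC (Sum.inl (z, c))) (i, c'))
            = (0 : Fin n → ZMod 2) := by
          funext i
          simp [LinearMap.funLeft_apply, thickZ, h]
        rw [e]
        exact Submodule.zero_mem _
    | inr ij =>
      obtain ⟨i, j⟩ := ij
      apply Submodule.mem_sup_right
      refine ⟨Pi.single (i, j) 1, ?_⟩
      rw [mulHC_single]
      funext p
      obtain ⟨i', c⟩ := p
      simp [LinearMap.funLeft_apply, thickZ]
  · apply sup_le
    · intro u hu
      have hdecomp : u = ∑ c, embedCol n c (fun i => u (i, c)) := by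
        funext p
        obtain ⟨i, c'⟩ := p
        rw [Finset.sum_apply, Finset.sum_eq_single c']
        · simp [embedCol]
        · intro c _ hne
          have h2 : ¬ ((c' : Fin nc) = c) := fun h => hne h.symm
          simp [embedCol, h2]
        · simp
      rw [hdecomp]
      apply Submodule.sum_mem
      intro c _
      have hS : (fun i => u (i, c)) ∈ rowSpan HZ := hu c
      have hmap : Submodule.map (embedCol n c) (rowSpan HZ)
          ≤ Submodule.span (ZMod 2)
            (Set.range fun s => (projA nX n r nc) (thickZ HX HZ HC s)) := by
        rw [rowSpan, Submodule.map_span, Submodule.span_le]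
        rintro _ ⟨_, ⟨z, rfl⟩, rfl⟩
        apply Submodule.subset_span
        refine ⟨Sum.inl (z, c), ?_⟩
        funext p
        obtain ⟨i, c'⟩ := p
        simp [embedCol, thickZ, LinearMap.funLeft_apply]
      exact hmap ⟨_, hS, rfl⟩
    · rintro _ ⟨Λ, rfl⟩
      have hdecomp : Λ = ∑ q : Fin n × Fin r, Λ q • Pi.single q (1 : ZMod 2) := by
        funext q'
        rw [Finset.sum_apply, Finset.sum_eq_single q']
        · simp
        · intro q _ hne
          have h2 : ¬ (q' = q) := fun h => hne h.symm
          simp [Pi.single_apply, h2]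
        · simp
      rw [hdecomp, map_sum]
      apply Submodule.sum_mem
      rintro ⟨i, j⟩ _
      rw [LinearMap.map_smul]
      apply Submodule.smul_mem
      apply Submodule.subset_span
      refine ⟨Sum.inr (i, j), ?_⟩
      rw [mulHC_single]
      funext p
      obtain ⟨i', c⟩ := p
      simp [LinearMap.funLeft_apply, thickZ]

end MapLemmas

/-! ### Injectivity of the projection on the thickened kernel -/

lemma projA_injOn_ker {nX n r nc : ℕ} (HX : Matrix (Fin nX) (Fin n) (ZMod 2))
    (HC : Matrix (Fin r) (Fin nc) (ZMod 2))
    (hrank : LinearIndependent (ZMod 2) (fun i : Fin r => HC i)) :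
    ∀ v ∈ kerMat (thickX HX HC), projA nX n r nc v = 0 → v = 0 := by
  intro v hv h0
  rw [mem_kerThick] at hv
  have hz : ∀ (i : Fin n) (c : Fin nc), v (Sum.inl (i, c)) = 0 := by
    intro i c
    exact congrFun h0 (i, c)
  have hinr : ∀ x j, v (Sum.inr (x, j)) = 0 := by
    intro x j
    refine Fintype.linearIndependent_iff.mp hrank (fun j => v (Sum.inr (x, j))) ?_ j
    funext c
    have h1 := hv x c
    simp only [hz, mul_zero, Finset.sum_const_zero, zero_add] at h1
    rw [Finset.sum_apply, Pi.zero_apply]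
    rw [← h1]
    exact Finset.sum_congr rfl fun j _ => by simp [mul_comm]
  funext s
  cases s with
  | inl p => obtain ⟨i, c⟩ := p; exact hz i c
  | inr q => obtain ⟨x, j⟩ := q; exact hinr x j

/-- **Generalized thickening is a CSS code with `k · k_c` logical qubits.** -/
theorem thickening_logical_qubits {nX nZ n r nc : ℕ}
    (HX : Matrix (Fin nX) (Fin n) (ZMod 2)) (HZ : Matrix (Fin nZ) (Fin n) (ZMod 2))
    (HC : Matrix (Fin r) (Fin nc) (ZMod 2))
    (hcss : HX * HZ.transpose = 0)
    (hrank : LinearIndependent (ZMod 2) (fun i : Fin r => HC i)) :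
    thickX HX HC * (thickZ HX HZ HC).transpose = 0 ∧
      logicalDim (thickX HX HC) (thickZ HX HZ HC) =
        logicalDim HX HZ * Module.finrank (ZMod 2) (LinearMap.ker HC.mulVecLin) := by
  have horth : thickX HX HC * (thickZ HX HZ HC).transpose = 0 := thick_orth HX HZ HC hcss
  refine ⟨horth, ?_⟩
  have hSK : rowSpan HZ ≤ kerMat HX := rowSpan_le_kerMat hcss
  have hrow'ker' : rowSpan (thickZ HX HZ HC) ≤ kerMat (thickX HX HC) :=
    rowSpan_le_kerMat horth
  have E1 := logicalDim_add_finrank hrow'ker'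
  have E6 := logicalDim_add_finrank hSK
  have E7 := HC_ker_finrank hrank
  have hinj := projA_injOn_ker HX HC hrank
  have E2 := finrank_map_of_injOn (projA nX n r nc) (kerMat (thickX HX HC)) hinj
  have E3 := finrank_map_of_injOn (projA nX n r nc) (rowSpan (thickZ HX HZ HC))
    (fun v hv => hinj v (hrow'ker' hv))
  rw [map_kerThick HX HC hrank] at E2
  rw [map_rowThick HX HZ HC] at E3
  have hMHC : Module.finrank (ZMod 2) (LinearMap.range (mulHC n HC)) = n * r := by
    have h := (LinearEquiv.ofInjective (mulHC n HC) (mulHC_inj hrank n)).finrank_eq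
    rw [← h, Module.finrank_fintype_fun_eq_card, Fintype.card_prod,
      Fintype.card_fin, Fintype.card_fin]
  have hmulHCinj : ∀ v : (Fin n × Fin r) → ZMod 2, v ∈ colSub (kerMat HX) r →
      mulHC n HC v = 0 → v = 0 :=
    fun v _ h => mulHC_inj hrank n (h.trans (map_zero (mulHC n HC)).symm)
  have hmulHCinjS : ∀ v : (Fin n × Fin r) → ZMod 2, v ∈ colSub (rowSpan HZ) r →
      mulHC n HC v = 0 → v = 0 :=
    fun v _ h => mulHC_inj hrank n (h.trans (map_zero (mulHC n HC)).symm)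
  have hmapK := finrank_map_of_injOn (mulHC n HC) (colSub (kerMat HX) r) hmulHCinj
  have hmapS := finrank_map_of_injOn (mulHC n HC) (colSub (rowSpan HZ) r) hmulHCinjS
  have E4 := Submodule.finrank_sup_add_finrank_inf_eq (colSub (kerMat HX) nc)
    (LinearMap.range (mulHC n HC))
  have E5 := Submodule.finrank_sup_add_finrank_inf_eq (colSub (rowSpan HZ) nc)
    (LinearMap.range (mulHC n HC))
  rw [colSub_inf_range_mulHC hrank, hmapK, finrank_colSub _ r, finrank_colSub _ nc, hMHC]
    at E4
  rw [colSub_inf_range_mulHC hrank, hmapS, finrank_colSub _ r, finrank_colSub _ nc, hMHC]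
    at E5
  set D' := logicalDim (thickX HX HC) (thickZ HX HZ HC) with hD'
  set L := logicalDim HX HZ with hLdef
  set a := Module.finrank (ZMod 2) (kerMat HX) with hadef
  set b := Module.finrank (ZMod 2) (rowSpan HZ) with hbdef
  set kc := Module.finrank (ZMod 2) (LinearMap.ker HC.mulVecLin) with hkcdef
  -- E1 : D' + finrank (rowSpan thickZ) = finrank (kerMat thickX)
  -- E2 : finrank (colSub K nc ⊔ MHC) = finrank (kerMat thickX)
  -- E3 : finrank (colSub S nc ⊔ MHC) = finrank (rowSpan thickZ)
  -- E4 : finrank (colSub K nc ⊔ MHC) + r * a = nc * a + n * r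
  -- E5 : finrank (colSub S nc ⊔ MHC) + r * b = nc * b + n * r
  have key : D' + nc * b + n * r + r * a = nc * a + n * r + r * b := by linarith
  rw [← E6, ← E7] at key
  have X : D' + (kc*b + r*b + n*r + (r*L + r*b)) = L*kc + (kc*b + r*b + n*r + (r*L + r*b)) := by
    calc D' + (kc*b + r*b + n*r + (r*L + r*b))
        = D' + (kc + r) * b + n * r + r * (L + b) := by ring
      _ = (kc + r) * (L + b) + n * r + r * b := key
      _ = L*kc + (kc*b + r*b + n*r + (r*L + r*b)) := by ring
  exact Nat.add_right_cancel X
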